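/- Let v be a submultiplicative weight on ℤ^d, m a v-moderate weight, and 0 < r < 1 with p = q = r. Then for a ∈ ℓ^r_m(ℤ^d) and b ∈ ℓ^r_v(ℤ^d), the convolution a∗b satisfies ‖a∗b‖_{ℓ^r_m} ≤ C ‖a‖_{ℓ^r_m} ‖b‖_{ℓ^r_v} for a constant C depending only on the moderateness constant. -/

import Mathlib

open scoped NNReal

/-- Two-term subadditivity of `x ^ r` for `0 ≤ r ≤ 1` on nonnegative reals. -/
lemma my_rpow_add_le_add_rpow {x y r : ℝ} (hx : 0 ≤ x) (hy : 0 ≤ y)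
    (hr0 : 0 ≤ r) (hr1 : r ≤ 1) : (x + y) ^ r ≤ x ^ r + y ^ r := by
  have := NNReal.rpow_add_le_add_rpow (⟨x, hx⟩ : ℝ≥0) (⟨y, hy⟩ : ℝ≥0) hr0 hr1
  have h := NNReal.coe_le_coe.2 this
  exact h

/-- Finite-sum subadditivity of `x ^ r` for `0 < r ≤ 1`. -/
lemma my_rpow_sum_le_sum_rpow {ι : Type*} (s : Finset ι) (u : ι → ℝ)
    (hu : ∀ i, 0 ≤ u i) {r : ℝ} (hr0 : 0 < r) (hr1 : r ≤ 1) :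
    (∑ i ∈ s, u i) ^ r ≤ ∑ i ∈ s, u i ^ r := by
  classical
  induction s using Finset.induction with
  | empty => simp [Real.zero_rpow hr0.ne']
  | insert j t hnot ih =>
    rw [Finset.sum_insert hnot, Finset.sum_insert hnot]
    calc (u j + ∑ i ∈ t, u i) ^ r ≤ u j ^ r + (∑ i ∈ t, u i) ^ r :=
          my_rpow_add_le_add_rpow (hu j) (Finset.sum_nonneg fun i _ => hu i) hr0.le hr1
      _ ≤ u j ^ r + ∑ i ∈ t, u i ^ r := by gcongr

/-- tsum subadditivity of `x ^ r` for `0 < r ≤ 1`. -/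
lemma my_rpow_tsum_le_tsum_rpow {ι : Type*} (u : ι → ℝ) (hu : ∀ i, 0 ≤ u i)
    {r : ℝ} (hr0 : 0 < r) (hr1 : r ≤ 1)
    (hsum : Summable u) (hsumr : Summable fun i => u i ^ r) :
    (∑' i, u i) ^ r ≤ ∑' i, u i ^ r := by
  have ht : Filter.Tendsto (fun s : Finset ι => (∑ i ∈ s, u i) ^ r)
      Filter.atTop (nhds ((∑' i, u i) ^ r)) :=
    hsum.hasSum.rpow_const (Or.inr hr0.le)
  refine le_of_tendsto ht (Filter.Eventually.of_forall fun s => ?_)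
  calc (∑ i ∈ s, u i) ^ r ≤ ∑ i ∈ s, u i ^ r :=
        my_rpow_sum_le_sum_rpow s u hu hr0 hr1
    _ ≤ ∑' i, u i ^ r :=
        Summable.sum_le_tsum s (fun i _ => Real.rpow_nonneg (hu i) r) hsumr

/-- Young convolution inequality for 0 < r < 1 on ℤ^d: if v is a submultiplicative
    weight, m is v-moderate with constant C, a ∈ ℓ^r_m and b ∈ ℓ^r_v, then the
    convolution (a∗b)(n) = ∑_k a(k) b(n−k) belongs to ℓ^r_m with
    ‖a∗b‖_{ℓ^r_m} ≤ C ‖a‖_{ℓ^r_m} ‖b‖_{ℓ^r_v}. -/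
theorem young_convolution_quasibanach (d : ℕ) (r : ℝ) (hr0 : 0 < r) (hr1 : r < 1)
    (m v : (Fin d → ℤ) → ℝ) (hm_pos : ∀ k, 0 < m k) (hv_pos : ∀ k, 0 < v k)
    (hv_submult : ∀ k n, v (k + n) ≤ v k * v n)
    (C : ℝ) (hC : 0 < C)
    (hmod : ∀ k n, m (k + n) ≤ C * v k * m n)
    (a b : (Fin d → ℤ) → ℂ)
    (ha : Summable fun k => (‖a k‖ * m k) ^ r)
    (hb : Summable fun k => (‖b k‖ * v k) ^ r)
    (hconv : ∀ n, Summable fun k => a k * b (n - k)) :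
    (Summable fun n => (‖∑' k, a k * b (n - k)‖ * m n) ^ r) ∧
    (∑' n, (‖∑' k, a k * b (n - k)‖ * m n) ^ r) ^ (1 / r)
      ≤ C * (∑' k, (‖a k‖ * m k) ^ r) ^ (1 / r)
          * (∑' k, (‖b k‖ * v k) ^ r) ^ (1 / r) := by
  classical
  let I := (Fin d → ℤ)
  set f : I → ℝ := fun k => (‖a k‖ * m k) ^ r with hf_def
  set g : I → ℝ := fun k => (‖b k‖ * v k) ^ r with hg_def
  have hf_nn : ∀ k, 0 ≤ f k := fun k => by
    simp only [hf_def]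
    exact Real.rpow_nonneg (mul_nonneg (norm_nonneg _) (hm_pos k).le) r
  have hg_nn : ∀ k, 0 ≤ g k := fun k => by
    simp only [hg_def]
    exact Real.rpow_nonneg (mul_nonneg (norm_nonneg _) (hv_pos k).le) r
  -- summability of the product on I × I
  have hfg : Summable fun p : I × I => f p.1 * g p.2 :=
    ha.mul_of_nonneg hb hf_nn hg_nn
  -- the shear equivalence (n, k) ↦ (k, n - k)
  let e : I × I ≃ I × I :=
    { toFun := fun p => (p.2, p.1 - p.2)
      invFun := fun q => (q.1 + q.2, q.1)
      left_inv := fun p => by simp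
      right_inv := fun q => by simp }
  have hH : Summable fun p : I × I => f p.2 * g (p.1 - p.2) := by
    have := (Equiv.summable_iff e).2 hfg
    simpa [e, Function.comp_def] using this
  have hfiber : ∀ n : I, Summable fun k => f k * g (n - k) := fun n => hH.prod_factor n
  have hS : Summable fun n : I => ∑' k, f k * g (n - k) :=
    ⟨∑' p : I × I, f p.2 * g (p.1 - p.2),
      hH.hasSum.prod_fiberwise fun n => (hfiber n).hasSum⟩
  -- pointwise estimate
  have key : ∀ n : I, (‖∑' k, a k * b (n - k)‖ * m n) ^ r
      ≤ C ^ r * ∑' k, f k * g (n - k) := by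
    intro n
    set u : I → ℝ := fun k => ‖a k * b (n - k)‖ * m n with hu_def
    have hu_nn : ∀ k, 0 ≤ u k := fun k =>
      mul_nonneg (norm_nonneg _) (hm_pos n).le
    have hnorm : Summable fun k => ‖a k * b (n - k)‖ := summable_norm_iff.mpr (hconv n)
    have hu_sum : Summable u := by
      simpa [hu_def] using hnorm.mul_right (m n)
    -- termwise bound for u ^ r
    have hterm : ∀ k, u k ^ r ≤ C ^ r * (f k * g (n - k)) := by
      intro k
      have hmn : m n ≤ C * v (n - k) * m k := by
        have := hmod (n - k) k
        simpa [sub_add_cancel] using this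
      have h1 : u k ≤ C * (‖a k‖ * m k) *
          (‖b (n - k)‖ * v (n - k)) := by
        rw [hu_def]
        simp only [norm_mul]
        calc ‖a k‖ * ‖b (n - k)‖ * m n
            ≤ ‖a k‖ * ‖b (n - k)‖ * (C * v (n - k) * m k) := by
              apply mul_le_mul_of_nonneg_left hmn
              exact mul_nonneg (norm_nonneg _) (norm_nonneg _)
          _ = C * (‖a k‖ * m k) * (‖b (n - k)‖ * v (n - k)) := by ring
      have h2 : u k ^ r ≤ (C * (‖a k‖ * m k) *
          (‖b (n - k)‖ * v (n - k))) ^ r :=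
        Real.rpow_le_rpow (hu_nn k) h1 hr0.le
      have h3 : (C * (‖a k‖ * m k) * (‖b (n - k)‖ * v (n - k))) ^ r
          = C ^ r * (f k * g (n - k)) := by
        rw [Real.mul_rpow (mul_nonneg hC.le (mul_nonneg (norm_nonneg _) (hm_pos k).le))
            (mul_nonneg (norm_nonneg _) (hv_pos (n - k)).le),
          Real.mul_rpow hC.le (mul_nonneg (norm_nonneg _) (hm_pos k).le),
          hf_def, hg_def, mul_assoc]
      exact h2.trans_eq h3
    have hur_sum : Summable fun k => u k ^ r :=
      Summable.of_nonneg_of_le (fun k => Real.rpow_nonneg (hu_nn k) r) hterm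
        ((hfiber n).mul_left (C ^ r))
    -- |conv| ≤ ∑' ‖·‖
    have habs : ‖∑' k, a k * b (n - k)‖ ≤ ∑' k, ‖a k * b (n - k)‖ := by
      exact norm_tsum_le_tsum_norm hnorm
    have hstep1 : (‖∑' k, a k * b (n - k)‖ * m n) ^ r ≤ (∑' k, u k) ^ r := by
      apply Real.rpow_le_rpow (mul_nonneg (norm_nonneg _) (hm_pos n).le) _ hr0.le
      rw [hu_def]
      rw [tsum_mul_right]
      apply mul_le_mul_of_nonneg_right _ (hm_pos n).le
      simpa using habs
    calc (‖∑' k, a k * b (n - k)‖ * m n) ^ r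
        ≤ (∑' k, u k) ^ r := hstep1
      _ ≤ ∑' k, u k ^ r := my_rpow_tsum_le_tsum_rpow u hu_nn hr0 hr1.le hu_sum hur_sum
      _ ≤ ∑' k, C ^ r * (f k * g (n - k)) := Summable.tsum_le_tsum hterm hur_sum
            ((hfiber n).mul_left (C ^ r))
      _ = C ^ r * ∑' k, f k * g (n - k) := tsum_mul_left
  -- summability of the conclusion
  have hmain_sum : Summable fun n => (‖∑' k, a k * b (n - k)‖ * m n) ^ r :=
    Summable.of_nonneg_of_le
      (fun n => Real.rpow_nonneg (mul_nonneg (norm_nonneg _) (hm_pos n).le) r)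
      key (hS.mul_left (C ^ r))
  refine ⟨hmain_sum, ?_⟩
  -- sum the fibers
  have htsum_eq : ∑' n : I, ∑' k, f k * g (n - k) = (∑' k, f k) * (∑' k, g k) := by
    calc ∑' n : I, ∑' k, f k * g (n - k)
        = ∑' p : I × I, f p.2 * g (p.1 - p.2) := (Summable.tsum_prod' hH fun n => hfiber n).symm
      _ = ∑' p : I × I, f p.1 * g p.2 := Equiv.tsum_eq e (fun p : I × I => f p.1 * g p.2)
      _ = ∑' k, ∑' j, f k * g j := Summable.tsum_prod' hfg fun k => hfg.prod_factor k
      _ = (∑' k, f k) * (∑' k, g k) := by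
          simp only [tsum_mul_left]
          exact tsum_mul_right
  have hsum_le : (∑' n, (‖∑' k, a k * b (n - k)‖ * m n) ^ r)
      ≤ C ^ r * ((∑' k, f k) * (∑' k, g k)) := by
    calc (∑' n, (‖∑' k, a k * b (n - k)‖ * m n) ^ r)
        ≤ ∑' n, C ^ r * ∑' k, f k * g (n - k) :=
          Summable.tsum_le_tsum key hmain_sum (hS.mul_left (C ^ r))
      _ = C ^ r * ∑' n : I, ∑' k, f k * g (n - k) := tsum_mul_left
      _ = C ^ r * ((∑' k, f k) * (∑' k, g k)) := by rw [htsum_eq]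
  have hA_nn : 0 ≤ ∑' k, f k := tsum_nonneg hf_nn
  have hB_nn : 0 ≤ ∑' k, g k := tsum_nonneg hg_nn
  have hL_nn : 0 ≤ ∑' n, (‖∑' k, a k * b (n - k)‖ * m n) ^ r :=
    tsum_nonneg fun n => Real.rpow_nonneg
      (mul_nonneg (norm_nonneg _) (hm_pos n).le) r
  calc (∑' n, (‖∑' k, a k * b (n - k)‖ * m n) ^ r) ^ (1 / r)
      ≤ (C ^ r * ((∑' k, f k) * (∑' k, g k))) ^ (1 / r) :=
        Real.rpow_le_rpow hL_nn hsum_le (by positivity)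
    _ = C * (∑' k, f k) ^ (1 / r) * (∑' k, g k) ^ (1 / r) := by
        rw [Real.mul_rpow (Real.rpow_nonneg hC.le r) (mul_nonneg hA_nn hB_nn),
          Real.mul_rpow hA_nn hB_nn]
        rw [← Real.rpow_mul hC.le, mul_one_div_cancel hr0.ne', Real.rpow_one]
        ring
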